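/- If a set Γ of k pairwise non-isomorphic finite posets, each of size n, has a witness, then it has a witness of size at most nk. -/

import Mathlib

/-!
Formalization framework: finite posets are bundled as `FinPartOrd.{0}`, downsets are
`Finset`s of elements, unlabelled posets are isomorphism classes (`UPoset`), and a witness
of a set `Γ` of unlabelled posets at size `n` is a finite poset whose set of size-`n`
downsets, up to isomorphism, is exactly `Γ`.
-/

attribute [local instance] Classical.propDecidable

noncomputable section

open Finset

/-- `D` is a downset of the finite poset `Q`. -/
def IsDownset (Q : FinPartOrd.{0}) (D : Finset ↥Q) : Prop :=
  ∀ ⦃a b : ↥Q⦄, a ∈ D → b ≤ a → b ∈ D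

/-- The induced subposet of `Q` on a finset `D` of its elements. -/
def subposet (Q : FinPartOrd.{0}) (D : Finset ↥Q) : FinPartOrd.{0} :=
  FinPartOrd.of {x : ↥Q // x ∈ D}

/-- The isomorphism setoid on finite posets. -/
def isoSetoid : Setoid FinPartOrd.{0} where
  r P Q := Nonempty (↥P ≃o ↥Q)
  iseqv := ⟨fun _ => ⟨OrderIso.refl _⟩, fun ⟨e⟩ => ⟨e.symm⟩, fun ⟨e⟩ ⟨f⟩ => ⟨e.trans f⟩⟩

/-- Unlabelled finite posets: isomorphism classes of finite posets. -/
def UPoset := Quotient isoSetoid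

/-- The isomorphism class of a finite poset. -/
def cls (P : FinPartOrd.{0}) : UPoset := Quotient.mk isoSetoid P

/-- The number of elements of a finite poset. -/
def size (Q : FinPartOrd.{0}) : ℕ := Fintype.card ↥Q

/-- The size of an isomorphism class of finite posets. -/
def usize : UPoset → ℕ :=
  Quotient.lift size fun _ _ h => h.elim fun e => Fintype.card_congr e.toEquiv

/-- `D_n(Q)` : the set of downsets of `Q` of size `n`, up to isomorphism. -/
def DSet (n : ℕ) (Q : FinPartOrd.{0}) : Set UPoset :=
  {c | ∃ D : Finset ↥Q, IsDownset Q D ∧ D.card = n ∧ cls (subposet Q D) = c}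

/-- `d_n(Q)` : the number of isomorphism classes of downsets of `Q` of size `n`. -/
def dNum (n : ℕ) (Q : FinPartOrd.{0}) : ℕ := (DSet n Q).ncard

/-- `D(Q)` : the set of nonempty downsets of `Q`, up to isomorphism. -/
def DAllSet (Q : FinPartOrd.{0}) : Set UPoset :=
  {c | ∃ D : Finset ↥Q, IsDownset Q D ∧ D.Nonempty ∧ cls (subposet Q D) = c}

/-- `Q` is a witness of the set `Γ` of unlabelled posets (at size `n`): the set of size-`n`
downsets of `Q`, up to isomorphism, is exactly `Γ`. -/
def IsWitness (n : ℕ) (Γ : Set UPoset) (Q : FinPartOrd.{0}) : Prop := DSet n Q = Γ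

/-- `Q` is a minimal witness of `Γ` : `Q` is a witness and no proper downset of `Q` is
itself a witness of `Γ`. -/
def IsMinimalWitness (n : ℕ) (Γ : Set UPoset) (Q : FinPartOrd.{0}) : Prop :=
  IsWitness n Γ Q ∧
    ∀ D : Finset ↥Q, IsDownset Q D → D ≠ Finset.univ → ¬IsWitness n Γ (subposet Q D)

/-- The height of an element: the number of elements of a longest chain whose maximum is `x`. -/
def heightEl (Q : FinPartOrd.{0}) (x : ↥Q) : ℕ :=
  sSup {k | ∃ c : Finset ↥Q, IsChain (· ≤ ·) (c : Set ↥Q) ∧ x ∈ c ∧ (∀ y ∈ c, y ≤ x) ∧ c.card = k}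

/-- The height of a finite poset: the number of elements of a longest chain. -/
def posetHeight (Q : FinPartOrd.{0}) : ℕ :=
  sSup {k | ∃ c : Finset ↥Q, IsChain (· ≤ ·) (c : Set ↥Q) ∧ c.card = k}

/-- A finite poset is Newtonian if every element of level `i` covers every element of
level `i - 1`. -/
def Newtonian (Q : FinPartOrd.{0}) : Prop :=
  ∀ x y : ↥Q, heightEl Q y = heightEl Q x + 1 → x ⋖ y

/-- A finite poset is connected if it is nonempty and any two elements are joined by a
comparability path. -/
def ConnectedPoset (Q : FinPartOrd.{0}) : Prop :=
  Nonempty ↥Q ∧ ∀ x y : ↥Q, Relation.ReflTransGen (fun a b : ↥Q => a ≤ b ∨ b ≤ a) x y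

/-- `x` is a maximal element of the subset `W` of `Q`. -/
def IsMaxIn (Q : FinPartOrd.{0}) (W : Finset ↥Q) (x : ↥Q) : Prop :=
  x ∈ W ∧ ∀ y ∈ W, x ≤ y → y = x

/-- `x` is a maximal element of the finite poset `R`. -/
def IsMaxEl (R : FinPartOrd.{0}) (x : ↥R) : Prop := ∀ y, x ≤ y → y = x

/-- A poset of type 𝒲 : the disjoint union of two connected Newtonian posets that are not
isomorphic, but which only differ in one maximal element (they become isomorphic after the
removal of a suitable maximal element from each). -/
def TypeW (P : FinPartOrd.{0}) : Prop :=
  ∃ W₁ W₂ : Finset ↥P,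
    W₁ ∪ W₂ = Finset.univ ∧ Disjoint W₁ W₂ ∧
    (∀ x ∈ W₁, ∀ y ∈ W₂, ¬x ≤ y ∧ ¬y ≤ x) ∧
    ConnectedPoset (subposet P W₁) ∧ ConnectedPoset (subposet P W₂) ∧
    Newtonian (subposet P W₁) ∧ Newtonian (subposet P W₂) ∧
    ¬Nonempty (↥(subposet P W₁) ≃o ↥(subposet P W₂)) ∧
    ∃ x y, IsMaxIn P W₁ x ∧ IsMaxIn P W₂ y ∧
      Nonempty (↥(subposet P (W₁.erase x)) ≃o ↥(subposet P (W₂.erase y)))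

/-- An antichain on `i` elements. -/
def AntichainFin (i : ℕ) : Type := Fin i

instance (i : ℕ) : PartialOrder (AntichainFin i) where
  le x y := x = y
  le_refl _ := rfl
  le_trans a b c h₁ h₂ := show a = c from (show a = b from h₁).trans (show b = c from h₂)
  le_antisymm _ _ h _ := h

instance (i : ℕ) : Fintype (AntichainFin i) := inferInstanceAs (Fintype (Fin i))
instance (i : ℕ) : Fintype (WithTop (AntichainFin i)) :=
  inferInstanceAs (Fintype (Option (Fin i)))

/-- `Λ_i`: the poset with `i` minimal elements and one maximal element above all of them. -/
def Lambda (i : ℕ) : FinPartOrd.{0} := FinPartOrd.of (WithTop (AntichainFin i))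

/-- `k` disjoint copies of a poset `α`. -/
def Copies (k : ℕ) (α : Type) : Type := Fin k × α

instance (k : ℕ) (α : Type) [PartialOrder α] : PartialOrder (Copies k α) where
  le x y := x.1 = y.1 ∧ x.2 ≤ y.2
  le_refl _ := ⟨rfl, le_refl _⟩
  le_trans _ _ _ h₁ h₂ := ⟨h₁.1.trans h₂.1, le_trans h₁.2 h₂.2⟩
  le_antisymm x y h₁ h₂ := by
    obtain ⟨x₁, x₂⟩ := x
    obtain ⟨y₁, y₂⟩ := y
    obtain ⟨h, h'⟩ := h₁
    cases h
    exact congrArg _ (le_antisymm h' h₂.2)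

instance (k : ℕ) (α : Type) [Fintype α] : Fintype (Copies k α) :=
  inferInstanceAs (Fintype (Fin k × α))

/-- `H_ℓ`: the poset whose connected components are `ℓ` copies of `Λ₂` and one copy of
`Λ_{3(ℓ-1)}`. -/
def Hposet (ℓ : ℕ) : FinPartOrd.{0} :=
  FinPartOrd.of (Copies ℓ (WithTop (AntichainFin 2)) ⊕ WithTop (AntichainFin (3 * (ℓ - 1))))

/-- The poset `P₀` placed above a chain of `i` elements. -/
def withChain (P₀ : FinPartOrd.{0}) (i : ℕ) : FinPartOrd.{0} :=
  FinPartOrd.of (Fin i ⊕ₗ ↥P₀)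

/-- The disjoint union of two finite posets. -/
def disjSum (P R : FinPartOrd.{0}) : FinPartOrd.{0} := FinPartOrd.of (↥P ⊕ ↥R)

/-- The poset `P_iR_i`: the disjoint union of `P₀` and `R₀` each placed above a chain of
`i` elements. -/
def PRposet (P₀ R₀ : FinPartOrd.{0}) (i : ℕ) : FinPartOrd.{0} :=
  disjSum (withChain P₀ i) (withChain R₀ i)

/-- `C(P₀R₀) = |D(P₀)| + |D(R₀)| − |D(P₀) ∩ D(R₀)|`. -/
def CNum (P₀ R₀ : FinPartOrd.{0}) : ℕ :=
  (DAllSet P₀).ncard + (DAllSet R₀).ncard - (DAllSet P₀ ∩ DAllSet R₀).ncard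

/-- The vertices of the exchange graph: the downsets of `Q` of size `n`, as actual subsets. -/
def EGVert (n : ℕ) (Q : FinPartOrd.{0}) : Type :=
  {D : Finset ↥Q // IsDownset Q D ∧ D.card = n}

/-- The exchange graph `G_n(Q)`: two size-`n` downsets are adjacent iff they differ by
exactly one element. -/
def ExchangeGraph (n : ℕ) (Q : FinPartOrd.{0}) : SimpleGraph (EGVert n Q) where
  Adj X Y := (X.1 \ Y.1).card = 1 ∧ (Y.1 \ X.1).card = 1
  symm := ⟨fun X Y h => ⟨h.2, h.1⟩⟩
  loopless := ⟨fun X h => by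
    simp only [Finset.sdiff_self, Finset.card_empty] at h
    exact absurd h.1 (by simp)⟩

/-- The downset `D` of `Q`, viewed as a poset, is isomorphic (a "copy of") `P`. -/
def IsoTo (Q : FinPartOrd.{0}) (D : Finset ↥Q) (P : FinPartOrd.{0}) : Prop :=
  Nonempty (↥(subposet Q D) ≃o ↥P)

/-- A path `A :: M ++ [C]` in the exchange graph `G_n(Q)` whose first vertex is a copy of
`Pa`, whose last vertex is a copy of `Pb`, and all of whose internal vertices are copies of
`Pmid`. -/
def SpecialPath (n : ℕ) (Q : FinPartOrd.{0}) (Pa Pmid Pb : FinPartOrd.{0})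
    (A : EGVert n Q) (M : List (EGVert n Q)) (C : EGVert n Q) : Prop :=
  List.Chain' (ExchangeGraph n Q).Adj (A :: M ++ [C]) ∧
    IsoTo Q A.1 Pa ∧ IsoTo Q C.1 Pb ∧ ∀ v ∈ M, IsoTo Q v.1 Pmid

/-- `T` is an antichain in `Q`. -/
def IsAntichainIn (Q : FinPartOrd.{0}) (T : Finset ↥Q) : Prop :=
  ∀ x ∈ T, ∀ y ∈ T, x ≤ y → x = y

/-- The possible shapes of `A \ X` and `C \ X`: an antichain possibly together with a single
element below all of it and/or a single element above all of it, or a two-element chain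
together with one incomparable element. -/
def GoodForm (Q : FinPartOrd.{0}) (S : Finset ↥Q) : Prop :=
  (∃ T : Finset ↥Q, IsAntichainIn Q T ∧
    (S = T ∨
      (∃ b, b ∉ T ∧ S = insert b T ∧ ∀ x ∈ T, b < x) ∨
      (∃ t, t ∉ T ∧ S = insert t T ∧ ∀ x ∈ T, x < t) ∨
      (∃ b t, b ∉ T ∧ t ∉ T ∧ b ≠ t ∧ S = insert b (insert t T) ∧
        (∀ x ∈ T, b < x) ∧ ∀ x ∈ T, x < t))) ∨
  (∃ x y z : ↥Q, S = {x, y, z} ∧ x ≠ y ∧ x ≠ z ∧ y ≠ z ∧ x < y ∧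
    ¬x ≤ z ∧ ¬z ≤ x ∧ ¬y ≤ z ∧ ¬z ≤ y)

/-- If a set `Γ` of `k` pairwise non-isomorphic finite posets, each of size
`n`, has a witness, then it has a witness of size at most `n * k`. -/
def downIso (Q : FinPartOrd.{0}) (U : Finset ↥Q) (D : Finset ↥(subposet Q U)) :
    ↥(subposet (subposet Q U) D) ≃o ↥(subposet Q (D.image Subtype.val)) where
  toFun y := ⟨y.1.1, Finset.mem_image_of_mem _ y.2⟩
  invFun x := ⟨⟨x.1, by
      obtain ⟨y, hy, hxy⟩ := Finset.mem_image.mp x.2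
      exact hxy ▸ y.2⟩, by
      obtain ⟨y, hy, hxy⟩ := Finset.mem_image.mp x.2
      have h : (⟨x.1, hxy ▸ y.2⟩ : {z : ↥Q // z ∈ U}) = y := Subtype.ext hxy.symm
      rw [h]; exact hy⟩
  left_inv y := by apply Subtype.ext; apply Subtype.ext; rfl
  right_inv x := by apply Subtype.ext; rfl
  map_rel_iff' := Iff.rfl

theorem witness_bound_nk (n k : ℕ) (Γ : Set UPoset) (hΓfin : Γ.Finite)
    (hΓcard : Γ.ncard = k) (hΓsize : ∀ c ∈ Γ, usize c = n)
    (Q : FinPartOrd.{0}) (hQ : IsWitness n Γ Q) :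
    ∃ R : FinPartOrd.{0}, IsWitness n Γ R ∧ size R ≤ n * k := by
  classical
  have hmem : ∀ c ∈ hΓfin.toFinset,
      ∃ D : Finset ↥Q, IsDownset Q D ∧ D.card = n ∧ cls (subposet Q D) = c := by
    intro c hc
    exact (Set.ext_iff.mp hQ c).mpr (hΓfin.mem_toFinset.mp hc)
  choose! Dc hD1 hD2 hD3 using hmem
  set U : Finset ↥Q := hΓfin.toFinset.sup Dc with hUdef
  have hUdown : IsDownset Q U := by
    intro a b ha hb
    obtain ⟨c, hc, hac⟩ := Finset.mem_sup.mp ha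
    exact Finset.mem_sup.mpr ⟨c, hc, hD1 c hc hac hb⟩
  have hcardU : U.card ≤ n * k := by
    calc U.card ≤ ∑ c ∈ hΓfin.toFinset, (Dc c).card := by
          rw [hUdef, Finset.sup_eq_biUnion]; exact Finset.card_biUnion_le
      _ = ∑ c ∈ hΓfin.toFinset, n := Finset.sum_congr rfl (fun c hc => by rw [hD2 c hc])
      _ = hΓfin.toFinset.card * n := by rw [Finset.sum_const, smul_eq_mul]
      _ = n * k := by rw [← Set.ncard_eq_toFinset_card Γ hΓfin, hΓcard, Nat.mul_comm]
  refine ⟨subposet Q U, ?_, ?_⟩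
  · ext c
    constructor
    · rintro ⟨D, hDdown, hDcard, hDcls⟩
      have h1 : IsDownset Q (D.image Subtype.val) := by
        intro a b ha hb
        obtain ⟨y, hy, rfl⟩ := Finset.mem_image.mp ha
        have hbU : b ∈ U := hUdown y.2 hb
        have : (⟨b, hbU⟩ : {x : ↥Q // x ∈ U}) ∈ D := hDdown hy hb
        exact Finset.mem_image_of_mem _ this
      have h2 : (D.image Subtype.val).card = n := by
        exact (Finset.card_image_of_injective D (Subtype.val_injective (p := fun x => x ∈ U))).trans hDcard
      have h3 : cls (subposet Q (D.image Subtype.val)) = c := by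
        rw [← hDcls]
        exact Quotient.sound ⟨(downIso Q U D).symm⟩
      exact (Set.ext_iff.mp hQ c).mp ⟨D.image Subtype.val, h1, h2, h3⟩
    · intro hc
      have hcF : c ∈ hΓfin.toFinset := hΓfin.mem_toFinset.mpr hc
      have hsubU : Dc c ⊆ U := Finset.le_sup hcF
      set D : Finset ↥(subposet Q U) :=
        Finset.univ.filter (fun y : ↥(subposet Q U) => y.1 ∈ Dc c) with hDdef
      have himg : D.image Subtype.val = Dc c := by
        ext x
        constructor
        · intro hx
          obtain ⟨y, hy, rfl⟩ := Finset.mem_image.mp hx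
          exact (Finset.mem_filter.mp hy).2
        · intro hx
          exact Finset.mem_image.mpr ⟨⟨x, hsubU hx⟩, Finset.mem_filter.mpr ⟨Finset.mem_univ _, hx⟩, rfl⟩
      refine ⟨D, ?_, ?_, ?_⟩
      · intro a b ha hb
        have ha' : a.1 ∈ Dc c := (Finset.mem_filter.mp ha).2
        have hb' : b.1 ∈ Dc c := hD1 c hcF ha' hb
        exact Finset.mem_filter.mpr ⟨Finset.mem_univ _, hb'⟩
      · have := Finset.card_image_of_injective D (Subtype.val_injective (p := fun x => x ∈ U))
        exact this.symm.trans ((congrArg Finset.card himg).trans (hD2 c hcF))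
      · have : cls (subposet (subposet Q U) D) = cls (subposet Q (Dc c)) := by
          rw [← himg]
          exact Quotient.sound ⟨downIso Q U D⟩
        rw [this, hD3 c hcF]
  · have : size (subposet Q U) = U.card := Fintype.card_coe U
    rw [this]; exact hcardU
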